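/- Asymptotics of the transformed eigenfunction: let f_j = e^{α_j y + c_j} + δ_j e^{β_j y + d_j} with α_j > β_j for all j, all Wronskians nonvanishing, and define φ¹[N] = W(f₁,…,f_N, 1)/W(f₁,…,f_N). Then φ¹[N](y) → (−1)^N ∏ α_j as y → +∞ and φ¹[N](y) → (−1)^N ∏ β_j as y → −∞. -/

import Mathlib

open Filter Real

lemma hasDerivAt_exp_aff (a c y : ℝ) :
    HasDerivAt (fun y => Real.exp (a * y + c)) (a * Real.exp (a * y + c)) y := by
  have h : HasDerivAt (fun y : ℝ => a * y + c) a y := by simpa using ((hasDerivAt_id y).const_mul a).add_const c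
  simpa [mul_comm] using h.exp

lemma iter_two_exp (a b c d δ : ℝ) (k : ℕ) :
    iteratedDeriv k (fun y => Real.exp (a * y + c) + δ * Real.exp (b * y + d))
      = fun y => a ^ k * Real.exp (a * y + c) + δ * b ^ k * Real.exp (b * y + d) := by
  induction k with
  | zero => funext y; simp
  | succ k ih =>
    rw [iteratedDeriv_succ, ih]
    funext y
    have h1 : HasDerivAt (fun y => a ^ k * Real.exp (a * y + c))
        (a ^ k * (a * Real.exp (a * y + c))) y := (hasDerivAt_exp_aff a c y).const_mul _
    have h2 : HasDerivAt (fun y => δ * b ^ k * Real.exp (b * y + d))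
        (δ * b ^ k * (b * Real.exp (b * y + d))) y := (hasDerivAt_exp_aff b d y).const_mul _
    refine (h1.add h2).deriv.trans ?_
    ring

lemma iter_one (k : ℕ) :
    iteratedDeriv k (fun _ : ℝ => (1:ℝ)) = fun _ => if k = 0 then (1:ℝ) else 0 := by
  cases k with
  | zero => funext y; simp
  | succ k =>
    funext y
    rw [iteratedDeriv_succ']
    rw [show deriv (fun _:ℝ => (1:ℝ)) = fun _ => (0:ℝ) from funext fun _ => deriv_const _ _]
    rw [iteratedDeriv_eq_iterate]
    rw [Function.iterate_fixed (funext fun _ => deriv_const _ _)]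
    simp

open Filter Real Matrix

lemma vand_ne (N : ℕ) (a : Fin N → ℝ) (haa : ∀ i j, i ≠ j → a i ≠ a j) :
    Matrix.det (Matrix.vandermonde a) ≠ 0 := by
  rw [Matrix.det_vandermonde]
  refine Finset.prod_ne_zero_iff.mpr fun i _ => Finset.prod_ne_zero_iff.mpr fun j hj => ?_
  exact sub_ne_zero.mpr (haa j i (ne_of_gt (Finset.mem_Ioi.mp hj)))

lemma key_limit (N : ℕ) (a b p q r s : Fin N → ℝ)
    (hp : ∀ i, p i ≠ 0)
    (haa : ∀ i j, i ≠ j → a i ≠ a j)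
    (l : Filter ℝ)
    (hl : ∀ i, Filter.Tendsto (fun y => Real.exp ((b i - a i) * y + (s i - q i))) l (nhds 0))
    (M M1 : ℝ → ℝ)
    (hM : M = fun y => Matrix.det (Matrix.of fun i j : Fin N =>
        p i * a i ^ (j:ℕ) * Real.exp (a i * y + q i)
          + r i * b i ^ (j:ℕ) * Real.exp (b i * y + s i)))
    (hM1 : M1 = fun y => Matrix.det (Matrix.of fun i j : Fin N =>
        p i * a i ^ ((j:ℕ)+1) * Real.exp (a i * y + q i)
          + r i * b i ^ ((j:ℕ)+1) * Real.exp (b i * y + s i))) :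
    Filter.Tendsto (fun y => M1 y / M y) l (nhds (∏ i, a i)) := by
  set ε : Fin N → ℝ → ℝ := fun i y => (r i / p i) * Real.exp ((b i - a i) * y + (s i - q i))
    with hε
  set A : ℝ → Matrix (Fin N) (Fin N) ℝ :=
    fun y => Matrix.of fun i j => a i ^ (j:ℕ) + ε i y * b i ^ (j:ℕ) with hA
  set B : ℝ → Matrix (Fin N) (Fin N) ℝ :=
    fun y => Matrix.of fun i j => a i ^ ((j:ℕ)+1) + ε i y * b i ^ ((j:ℕ)+1) with hB
  have hentry : ∀ (i : Fin N) (k : ℕ) (y : ℝ),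
      p i * a i ^ k * Real.exp (a i * y + q i) + r i * b i ^ k * Real.exp (b i * y + s i)
        = (p i * Real.exp (a i * y + q i)) * (a i ^ k + ε i y * b i ^ k) := by
    intro i k y
    have h2 : Real.exp (a i * y + q i) * Real.exp ((b i - a i) * y + (s i - q i))
        = Real.exp (b i * y + s i) := by
      rw [← Real.exp_add]; ring_nf
    have h3 : p i * (r i / p i) = r i := by
      rw [mul_div_assoc']
      exact mul_div_cancel_left₀ (r i) (hp i)
    rw [hε, ← h2]
    linear_combination (-(Real.exp (a i * y + q i)
      * Real.exp ((b i - a i) * y + (s i - q i)) * b i ^ k)) * h3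
  have hMA : ∀ y, M y = (∏ i, p i * Real.exp (a i * y + q i)) * (A y).det := by
    intro y
    have he : (Matrix.of fun i j : Fin N =>
        p i * a i ^ (j:ℕ) * Real.exp (a i * y + q i)
          + r i * b i ^ (j:ℕ) * Real.exp (b i * y + s i))
        = Matrix.of fun i j => (p i * Real.exp (a i * y + q i)) * (A y) i j := by
      ext i j
      exact hentry i j y
    rw [hM]
    dsimp only
    rw [he, Matrix.det_mul_column]
  have hMB : ∀ y, M1 y = (∏ i, p i * Real.exp (a i * y + q i)) * (B y).det := by
    intro y
    have he : (Matrix.of fun i j : Fin N =>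
        p i * a i ^ ((j:ℕ)+1) * Real.exp (a i * y + q i)
          + r i * b i ^ ((j:ℕ)+1) * Real.exp (b i * y + s i))
        = Matrix.of fun i j => (p i * Real.exp (a i * y + q i)) * (B y) i j := by
      ext i j
      exact hentry i ((j:ℕ)+1) y
    rw [hM1]
    dsimp only
    rw [he, Matrix.det_mul_column]
  have hratio : ∀ y, M1 y / M y = (B y).det / (A y).det := by
    intro y
    rw [hMA, hMB, mul_div_mul_left]
    exact Finset.prod_ne_zero_iff.mpr fun i _ => mul_ne_zero (hp i) (Real.exp_ne_zero _)
  have hεlim : ∀ i, Tendsto (fun y => ε i y) l (nhds 0) := by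
    intro i
    have := (hl i).const_mul (r i / p i)
    simpa using this
  have hAmat : Tendsto A l (nhds (Matrix.vandermonde a)) := by
    refine tendsto_pi_nhds.mpr ?_
    intro i
    rw [tendsto_pi_nhds]
    intro j
    have : Tendsto (fun y => a i ^ (j:ℕ) + ε i y * b i ^ (j:ℕ)) l
        (nhds (a i ^ (j:ℕ) + 0 * b i ^ (j:ℕ))) :=
      tendsto_const_nhds.add ((hεlim i).mul_const _)
    simpa [hA, Matrix.vandermonde] using this
  have hAd : Tendsto (fun y => (A y).det) l (nhds (Matrix.vandermonde a).det) :=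
    ((continuous_id.matrix_det).tendsto _).comp hAmat
  have hBmat : Tendsto B l (nhds (Matrix.of fun i j : Fin N => a i ^ ((j:ℕ)+1))) := by
    refine tendsto_pi_nhds.mpr ?_
    intro i
    rw [tendsto_pi_nhds]
    intro j
    have : Tendsto (fun y => a i ^ ((j:ℕ)+1) + ε i y * b i ^ ((j:ℕ)+1)) l
        (nhds (a i ^ ((j:ℕ)+1) + 0 * b i ^ ((j:ℕ)+1))) :=
      tendsto_const_nhds.add ((hεlim i).mul_const _)
    simpa [hB] using this
  have hBd : Tendsto (fun y => (B y).det) l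
      (nhds ((∏ i, a i) * (Matrix.vandermonde a).det)) := by
    have h := ((continuous_id.matrix_det).tendsto _).comp hBmat
    have hdc : Matrix.det (Matrix.of fun i j : Fin N => a i ^ ((j:ℕ)+1))
        = (∏ i, a i) * (Matrix.vandermonde a).det := by
      have he2 : (Matrix.of fun i j : Fin N => a i ^ ((j:ℕ)+1))
          = Matrix.of fun i j => a i * (Matrix.vandermonde a) i j := by
        ext i j
        rw [Matrix.of_apply, Matrix.of_apply, Matrix.vandermonde_apply, pow_succ']
      rw [he2, Matrix.det_mul_column]
    simpa [hdc, Function.comp_def] using h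
  have hvne := vand_ne N a haa
  have := hBd.div hAd hvne
  rw [mul_div_assoc, div_self hvne, mul_one] at this
  exact this.congr' (Eventually.of_forall fun y => (hratio y).symm)

lemma wn1_expand (N : ℕ) (f : Fin N → ℝ → ℝ) (F : Fin (N + 1) → ℝ → ℝ)
    (hF : F = Fin.snoc f (fun _ => (1 : ℝ))) (y : ℝ) :
    Matrix.det (Matrix.of fun i j : Fin (N + 1) => iteratedDeriv (j : ℕ) (F i) y)
      = (-1 : ℝ) ^ N
        * Matrix.det (Matrix.of fun i j : Fin N => iteratedDeriv ((j : ℕ) + 1) (f i) y) := by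
  rw [Matrix.det_succ_row _ (Fin.last N)]
  have hlastrow : ∀ j : Fin (N + 1),
      (Matrix.of fun i j : Fin (N + 1) => iteratedDeriv (j : ℕ) (F i) y) (Fin.last N) j
        = if (j : ℕ) = 0 then 1 else 0 := by
    intro j
    rw [Matrix.of_apply, hF, Fin.snoc_last, iter_one]
  rw [Finset.sum_eq_single 0]
  · have hsub : (Matrix.of fun i j : Fin (N + 1) =>
        iteratedDeriv (j : ℕ) (F i) y).submatrix
          (Fin.last N).succAbove (0 : Fin (N + 1)).succAbove
        = Matrix.of fun i j : Fin N => iteratedDeriv ((j : ℕ) + 1) (f i) y := by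
      ext i j
      simp [Matrix.submatrix_apply, Fin.succAbove_last, Fin.succAbove_zero, hF,
        Fin.snoc_castSucc, Fin.val_succ]
    rw [hlastrow, hsub]
    simp [Fin.val_last]
  · intro j _ hj0
    rw [hlastrow]
    have : (j : ℕ) ≠ 0 := fun h => hj0 (by
      ext
      simpa using h)
    simp [this]
  · simp

/-- Asymptotics of `φ¹[N] = W(f₁,…,f_N,1)/W(f₁,…,f_N)` as `y → ±∞` for
two-exponential seed functions `f_j = e^{α_j y + c_j} + δ_j e^{β_j y + d_j}`. -/
theorem phi1_asymptotics
    (N : ℕ) (hN : 1 ≤ N)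
    (α β c d δ : Fin N → ℝ)
    (hαβ : ∀ j, β j < α j) (hδ : ∀ j, 0 < δ j)
    (hα0 : ∀ j, α j ≠ 0) (hβ0 : ∀ j, β j ≠ 0)
    (hαα : ∀ i j, i ≠ j → α i ≠ α j)
    (hββ : ∀ i j, i ≠ j → β i ≠ β j)
    (hαβ' : ∀ i j, α i ≠ β j)
    (f : Fin N → ℝ → ℝ)
    (hf : f = fun j y => Real.exp (α j * y + c j) + δ j * Real.exp (β j * y + d j))
    (F : Fin (N + 1) → ℝ → ℝ)
    (hF : F = Fin.snoc f (fun _ => (1 : ℝ)))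
    (WN WN1 φ : ℝ → ℝ)
    (hWN : WN = fun y => Matrix.det
        (Matrix.of fun i j : Fin N => iteratedDeriv (j : ℕ) (f i) y))
    (hWN1 : WN1 = fun y => Matrix.det
        (Matrix.of fun i j : Fin (N + 1) => iteratedDeriv (j : ℕ) (F i) y))
    (hWNne : ∀ y, WN y ≠ 0) (hWN1ne : ∀ y, WN1 y ≠ 0)
    (hφ : φ = fun y => WN1 y / WN y) :
    Filter.Tendsto φ Filter.atTop (nhds ((-1) ^ N * ∏ j, α j)) ∧
    Filter.Tendsto φ Filter.atBot (nhds ((-1) ^ N * ∏ j, β j)) := by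
  have hiter : ∀ (i : Fin N) (k : ℕ) (y : ℝ),
      iteratedDeriv k (f i) y
        = α i ^ k * Real.exp (α i * y + c i) + δ i * β i ^ k * Real.exp (β i * y + d i) := by
    intro i k y
    simp only [hf, iter_two_exp]
  have hW1 : ∀ y, WN1 y = (-1 : ℝ) ^ N
      * Matrix.det (Matrix.of fun i j : Fin N => iteratedDeriv ((j : ℕ) + 1) (f i) y) := by
    intro y
    rw [hWN1]
    exact wn1_expand N f F hF y
  constructor
  · -- atTop : dominant α
    set M1 : ℝ → ℝ := fun y =>
      Matrix.det (Matrix.of fun i j : Fin N => iteratedDeriv ((j : ℕ) + 1) (f i) y) with hM1def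
    have hkey := key_limit N α β (fun _ => (1 : ℝ)) c δ d
      (fun _ => one_ne_zero) hαα Filter.atTop
      (fun i => by
        have hlin : Filter.Tendsto (fun y : ℝ => (β i - α i) * y + (d i - c i))
            Filter.atTop Filter.atBot :=
          Filter.tendsto_atBot_add_const_right _ _
            ((tendsto_const_mul_atBot_of_neg (by linarith [hαβ i])).mpr tendsto_id)
        exact Real.tendsto_exp_atBot.comp hlin)
      WN M1
      (by
        rw [hWN]
        funext y
        congr 1
        ext i j
        rw [Matrix.of_apply, Matrix.of_apply, hiter]
        ring)
      (by
        rw [hM1def]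
        funext y
        congr 1
        ext i j
        rw [Matrix.of_apply, Matrix.of_apply, hiter]
        ring)
    have := hkey.const_mul ((-1 : ℝ) ^ N)
    refine this.congr' (Filter.Eventually.of_forall fun y => ?_)
    rw [hφ]
    dsimp only
    rw [hW1 y, mul_div_assoc, hM1def]
  · -- atBot : dominant β
    set M1 : ℝ → ℝ := fun y =>
      Matrix.det (Matrix.of fun i j : Fin N => iteratedDeriv ((j : ℕ) + 1) (f i) y) with hM1def
    have hkey := key_limit N β α δ d (fun _ => (1 : ℝ)) c
      (fun i => ne_of_gt (hδ i)) hββ Filter.atBot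
      (fun i => by
        have hlin : Filter.Tendsto (fun y : ℝ => (α i - β i) * y + (c i - d i))
            Filter.atBot Filter.atBot :=
          Filter.tendsto_atBot_add_const_right _ _
            ((tendsto_const_mul_atBot_of_pos (by linarith [hαβ i])).mpr tendsto_id)
        exact Real.tendsto_exp_atBot.comp hlin)
      WN M1
      (by
        rw [hWN]
        funext y
        congr 1
        ext i j
        rw [Matrix.of_apply, Matrix.of_apply, hiter]
        ring)
      (by
        rw [hM1def]
        funext y
        congr 1
        ext i j
        rw [Matrix.of_apply, Matrix.of_apply, hiter]
        ring)
    have := hkey.const_mul ((-1 : ℝ) ^ N)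
    refine this.congr' (Filter.Eventually.of_forall fun y => ?_)
    rw [hφ]
    dsimp only
    rw [hW1 y, mul_div_assoc, hM1def]
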